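/- With c_1, c_2 defined by the recurrences in Definition of c_r (type A_2^{(2)}), one has c_1(k22,k12,k11) = q^{k12² + 2·k22} · qmultinomial(k22+k12+k11; k22,k12,k11)_{q²}. -/
import Mathlib


open Polynomial

/-- Gaussian binomial coefficient in `ℤ[q]`, via the `q`-Pascal recurrence;
equals `(q)_n / ((q)_k (q)_{n-k})`. -/
noncomputable def qbinom : ℕ → ℕ → Polynomial ℤ
  | _, 0 => 1
  | 0, _ + 1 => 0
  | n + 1, k + 1 => qbinom n k + X ^ (k + 1) * qbinom n (k + 1)

/-- Gaussian multinomial coefficient `(a+b+c; a,b,c)_q = (q)_{a+b+c}/((q)_a(q)_b(q)_c)`. -/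
noncomputable def qmult (a b c : ℕ) : Polynomial ℤ :=
  qbinom (a + b + c) a * qbinom (b + c) b

lemma qbinom_zero (n : ℕ) : qbinom n 0 = 1 := by cases n <;> rfl
lemma qbinom_succ (n k : ℕ) : qbinom (n+1) (k+1) = qbinom n k + X ^ (k + 1) * qbinom n (k + 1) := rfl
lemma qbinom_eq_zero : ∀ {n k : ℕ}, n < k → qbinom n k = 0 := by
  intro n
  induction n with
  | zero => intro k h; match k, h with | k+1, _ => rfl
  | succ n ih =>
    intro k h
    match k, h with
    | k+1, h => rw [qbinom_succ, ih (by omega), ih (by omega)]; ring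
lemma qbinom_self (n : ℕ) : qbinom n n = 1 := by
  induction n with
  | zero => rfl
  | succ n ih => rw [qbinom_succ, ih, qbinom_eq_zero (by omega)]; ring

lemma qbinom_pascal' : ∀ n k : ℕ, k ≤ n →
    qbinom (n+1) (k+1) = X ^ (n-k) * qbinom n k + qbinom n (k+1) := by
  intro n
  induction n with
  | zero =>
    intro k hk
    interval_cases k
    simp [qbinom_succ, qbinom_zero, qbinom_eq_zero (show (0:ℕ) < 1 by omega)]
  | succ n ih =>
    intro k hk
    match k with
    | 0 =>
      have h1 := qbinom_succ (n+1) 0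
      have h2 : qbinom (n+1) 1 = X ^ n * qbinom n 0 + qbinom n 1 := by
        simpa using ih 0 (Nat.zero_le n)
      have h3 := qbinom_succ n 0
      have hz1 := qbinom_zero (n+1)
      have hz0 := qbinom_zero n
      simp only [Nat.zero_add, Nat.sub_zero] at *
      linear_combination h1 + X * h2 - h3 + (1 - X^(n+1)) * hz1 + (X^(n+1) - 1) * hz0
    | k+1 =>
      by_cases hkn : k + 1 ≤ n
      · obtain ⟨m, rfl⟩ : ∃ m, n = k+1+m := ⟨n-(k+1), by omega⟩
        have hA1 := qbinom_succ (k+1+m+1) (k+1)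
        have hB1 := ih k (by omega)
        have hB2 := ih (k+1) (by omega)
        have hA2 := qbinom_succ (k+1+m) k
        have hA3 := qbinom_succ (k+1+m) (k+1)
        rw [show k+1+m-k = m+1 from by omega] at hB1
        rw [show k+1+m-(k+1) = m from by omega] at hB2
        rw [show k+1+m+1-(k+1) = m+1 from by omega]
        linear_combination hA1 + hB1 + X^(k+2) * hB2 - X^(m+1) * hA2 - hA3
      · have hk' : k = n := by omega
        subst hk'
        rw [show k+1-(k+1) = 0 from by omega, qbinom_succ,
          qbinom_eq_zero (show k+1 < k+2 by omega)]
        ring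

lemma qmult_a0c (a c : ℕ) : qmult a 0 c = qbinom (a+c) a := by
  simp [qmult, qbinom_zero]
lemma qmult_ab0 (a b : ℕ) : qmult a b 0 = qbinom (a+b) a := by
  simp [qmult, qbinom_self]
lemma qmult_0bc (b c : ℕ) : qmult 0 b c = qbinom (b+c) b := by
  simp [qmult, qbinom_zero]

lemma L4 (b c : ℕ) : qmult 0 (b+1) (c+1)
    = X^(c+1) * qmult 0 b (c+1) + qmult 0 (b+1) c := by
  rw [qmult_0bc, qmult_0bc, qmult_0bc,
    show b+1+(c+1) = (b+c+1)+1 from by omega,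
    show b+(c+1) = b+c+1 from by omega,
    show b+1+c = b+c+1 from by omega]
  have e := qbinom_pascal' (b+c+1) b (by omega)
  rw [show b+c+1-b = c+1 from by omega] at e
  exact e

lemma L5a (a c : ℕ) : qmult (a+1) 0 (c+1)
    = X^(c+1) * qmult a 0 (c+1) + qmult (a+1) 0 c := by
  rw [qmult_a0c, qmult_a0c, qmult_a0c,
    show a+1+(c+1) = (a+c+1)+1 from by omega,
    show a+(c+1) = a+c+1 from by omega,
    show a+1+c = a+c+1 from by omega]
  have e := qbinom_pascal' (a+c+1) a (by omega)
  rw [show a+c+1-a = c+1 from by omega] at e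
  exact e

lemma L5b (a c : ℕ) : qmult (a+1) 0 (c+1)
    = qmult a 0 (c+1) + X^(a+1) * qmult (a+1) 0 c := by
  rw [qmult_a0c, qmult_a0c, qmult_a0c,
    show a+1+(c+1) = (a+c+1)+1 from by omega,
    show a+(c+1) = a+c+1 from by omega,
    show a+1+c = a+c+1 from by omega]
  exact qbinom_succ (a+c+1) a

lemma L6a (a b : ℕ) : qmult (a+1) (b+1) 0
    = X^(b+1) * qmult a (b+1) 0 + qmult (a+1) b 0 := by
  rw [qmult_ab0, qmult_ab0, qmult_ab0,
    show a+1+(b+1) = (a+b+1)+1 from by omega,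
    show a+(b+1) = a+b+1 from by omega,
    show a+1+b = a+b+1 from by omega]
  have e := qbinom_pascal' (a+b+1) a (by omega)
  rw [show a+b+1-a = b+1 from by omega] at e
  exact e

lemma L6b (a b : ℕ) : qmult (a+1) (b+1) 0
    = qmult a (b+1) 0 + X^(a+1) * qmult (a+1) b 0 := by
  rw [qmult_ab0, qmult_ab0, qmult_ab0,
    show a+1+(b+1) = (a+b+1)+1 from by omega,
    show a+(b+1) = a+b+1 from by omega,
    show a+1+b = a+b+1 from by omega]
  exact qbinom_succ (a+b+1) a

lemma L7a (a b c : ℕ) : qmult (a+1) (b+1) (c+1)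
    = X^(b+c+2) * qmult a (b+1) (c+1) + X^(c+1) * qmult (a+1) b (c+1)
      + qmult (a+1) (b+1) c := by
  unfold qmult
  rw [show a+1+(b+1)+(c+1) = (a+b+c+2)+1 from by omega,
    show a+(b+1)+(c+1) = a+b+c+2 from by omega,
    show a+1+b+(c+1) = a+b+c+2 from by omega,
    show a+1+(b+1)+c = a+b+c+2 from by omega,
    show b+1+(c+1) = (b+c+1)+1 from by omega,
    show b+(c+1) = b+c+1 from by omega,
    show b+1+c = b+c+1 from by omega]
  have e1 := qbinom_pascal' (a+b+c+2) a (by omega)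
  rw [show a+b+c+2-a = b+c+2 from by omega] at e1
  have e2 := qbinom_pascal' (b+c+1) b (by omega)
  rw [show b+c+1-b = c+1 from by omega] at e2
  rw [e1, e2]; ring

lemma L7b (a b c : ℕ) : qmult (a+1) (b+1) (c+1)
    = qmult a (b+1) (c+1) + X^(a+c+2) * qmult (a+1) b (c+1)
      + X^(a+1) * qmult (a+1) (b+1) c := by
  unfold qmult
  rw [show a+1+(b+1)+(c+1) = (a+b+c+2)+1 from by omega,
    show a+(b+1)+(c+1) = a+b+c+2 from by omega,
    show a+1+b+(c+1) = a+b+c+2 from by omega,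
    show a+1+(b+1)+c = a+b+c+2 from by omega,
    show b+1+(c+1) = (b+c+1)+1 from by omega,
    show b+(c+1) = b+c+1 from by omega,
    show b+1+c = b+c+1 from by omega]
  have e2 := qbinom_pascal' (b+c+1) b (by omega)
  rw [show b+c+1-b = c+1 from by omega] at e2
  rw [qbinom_succ (a+b+c+2) a, e2]; ring

/-- if `c₁, c₂ : ℤ³ → ℤ[q]` vanish on negative arguments, equal `1` at
`(0,0,0)`, and satisfy the type `A₂⁽²⁾` recurrences
`c₁(a,b,c) = q^{2n} c₂(a-1,b,c) + q^{2n-1} c₂(a,b-1,c) + c₁(a,b,c-1)` and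
`c₂(a,b,c) = c₂(a-1,b,c) + q^{2n-1} c₂(a,b-1,c) + c₁(a,b,c-1)` with `n = a+b+c ≥ 1`,
then `c₁(a,b,c) = q^{b²+2a} · qmultinomial(a+b+c; a,b,c)` evaluated at `q²` (STATEMENT 5). -/
theorem c1_closed_form
    (c₁ c₂ : ℤ → ℤ → ℤ → Polynomial ℤ)
    (hneg : ∀ a b c : ℤ, a < 0 ∨ b < 0 ∨ c < 0 → c₁ a b c = 0 ∧ c₂ a b c = 0)
    (hinit : c₁ 0 0 0 = 1 ∧ c₂ 0 0 0 = 1)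
    (hrec : ∀ a b c : ℕ, 1 ≤ a + b + c →
      c₁ a b c = X ^ (2 * (a + b + c)) * c₂ ((a : ℤ) - 1) b c
        + X ^ (2 * (a + b + c) - 1) * c₂ a ((b : ℤ) - 1) c
        + c₁ a b ((c : ℤ) - 1) ∧
      c₂ a b c = c₂ ((a : ℤ) - 1) b c
        + X ^ (2 * (a + b + c) - 1) * c₂ a ((b : ℤ) - 1) c
        + c₁ a b ((c : ℤ) - 1)) :
    ∀ a b c : ℕ, c₁ a b c = X ^ (b ^ 2 + 2 * a) * (qmult a b c).comp (X ^ 2) := by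
  have key : ∀ n : ℕ, ∀ a b c : ℕ, a + b + c = n →
      c₁ a b c = X ^ (b ^ 2 + 2 * a) * (qmult a b c).comp (X ^ 2) ∧
      c₂ a b c = X ^ (b ^ 2) * (qmult a b c).comp (X ^ 2) := by
    intro n
    induction n using Nat.strong_induction_on with
    | _ n ih =>
    intro a b c habc
    subst habc
    rcases Nat.eq_zero_or_pos (a + b + c) with h0 | hpos
    · obtain ⟨rfl, rfl, rfl⟩ : a = 0 ∧ b = 0 ∧ c = 0 := by omega
      constructor
      · simpa [qmult, qbinom_zero] using hinit.1
      · simpa [qmult, qbinom_zero] using hinit.2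
    · obtain ⟨h1, h2⟩ := hrec a b c (by omega)
      rcases a with _ | A <;> rcases b with _ | B <;> rcases c with _ | C
      · omega
      -- case (0,0,C+1)
      · have c0 : ((0:ℕ):ℤ) - 1 = -1 := by norm_num
        have cc : ((C+1:ℕ):ℤ) - 1 = (C:ℤ) := by push_cast; ring
        rw [c0, cc] at h1 h2
        rw [(hneg (-1) _ _ (Or.inl (by norm_num))).2,
            (hneg _ (-1) _ (Or.inr (Or.inl (by norm_num)))).2] at h1 h2
        have ihC := (ih (0 + 0 + C) (by omega) 0 0 C rfl).1
        rw [ihC] at h1 h2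
        have e : qmult 0 0 (C+1) = qmult 0 0 C := by
          rw [qmult_0bc, qmult_0bc, qbinom_zero, qbinom_zero]
        rw [h1, h2, e]
        constructor <;> ring
      -- case (0,B+1,0)
      · have c0 : ((0:ℕ):ℤ) - 1 = -1 := by norm_num
        have cb : ((B+1:ℕ):ℤ) - 1 = (B:ℤ) := by push_cast; ring
        rw [c0, cb] at h1 h2
        rw [(hneg (-1) _ _ (Or.inl (by norm_num))).2,
            (hneg _ _ (-1) (Or.inr (Or.inr (by norm_num)))).1] at h1 h2
        have ihB := (ih (0 + B + 0) (by omega) 0 B 0 rfl).2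
        rw [ihB] at h1 h2
        have e : qmult 0 (B+1) 0 = qmult 0 B 0 := by
          simp [qmult_0bc, qbinom_self]
        rw [h1, h2, e,
          show 2 * (0 + (B+1) + 0) - 1 = 2*B+1 from by omega]
        constructor <;> ring
      -- case (0,B+1,C+1)
      · have c0 : ((0:ℕ):ℤ) - 1 = -1 := by norm_num
        have cb : ((B+1:ℕ):ℤ) - 1 = (B:ℤ) := by push_cast; ring
        rw [c0, cb] at h1 h2
        rw [(hneg (-1) _ _ (Or.inl (by norm_num))).2] at h1 h2
        have cc : ((C+1:ℕ):ℤ) - 1 = (C:ℤ) := by push_cast; ring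
        rw [cc] at h1 h2
        have ihB := (ih (0 + B + (C+1)) (by omega) 0 B (C+1) rfl).2
        have ihC := (ih (0 + (B+1) + C) (by omega) 0 (B+1) C rfl).1
        rw [ihB, ihC] at h1 h2
        have hq := congrArg (fun p => p.comp ((X:Polynomial ℤ)^2)) (L4 B C)
        simp only [add_comp, mul_comp, X_pow_comp] at hq
        rw [h1, h2, hq,
          show 2 * (0 + (B+1) + (C+1)) - 1 = 2*B+2*C+3 from by omega]
        constructor <;> ring
      -- case (A+1,0,0)
      · have ca : ((A+1:ℕ):ℤ) - 1 = (A:ℤ) := by push_cast; ring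
        have c0 : ((0:ℕ):ℤ) - 1 = -1 := by norm_num
        rw [ca, c0] at h1 h2
        rw [(hneg _ (-1) _ (Or.inr (Or.inl (by norm_num)))).2,
            (hneg _ _ (-1) (Or.inr (Or.inr (by norm_num)))).1] at h1 h2
        have ihA := (ih (A + 0 + 0) (by omega) A 0 0 rfl).2
        rw [ihA] at h1 h2
        have e : qmult (A+1) 0 0 = qmult A 0 0 := by
          simp [qmult_a0c, qbinom_self]
        rw [h1, h2, e]
        constructor <;> ring
      -- case (A+1,0,C+1)
      · have ca : ((A+1:ℕ):ℤ) - 1 = (A:ℤ) := by push_cast; ring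
        have c0 : ((0:ℕ):ℤ) - 1 = -1 := by norm_num
        have cc : ((C+1:ℕ):ℤ) - 1 = (C:ℤ) := by push_cast; ring
        rw [ca, c0, cc] at h1 h2
        rw [(hneg _ (-1) _ (Or.inr (Or.inl (by norm_num)))).2] at h1 h2
        have ihA := (ih (A + 0 + (C+1)) (by omega) A 0 (C+1) rfl).2
        have ihC := (ih ((A+1) + 0 + C) (by omega) (A+1) 0 C rfl).1
        rw [ihA, ihC] at h1 h2
        have hqa := congrArg (fun p => p.comp ((X:Polynomial ℤ)^2)) (L5a A C)
        have hqb := congrArg (fun p => p.comp ((X:Polynomial ℤ)^2)) (L5b A C)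
        simp only [add_comp, mul_comp, X_pow_comp] at hqa hqb
        constructor
        · rw [h1, hqa]; ring
        · rw [h2, hqb]; ring
      -- case (A+1,B+1,0)
      · have ca : ((A+1:ℕ):ℤ) - 1 = (A:ℤ) := by push_cast; ring
        have cb : ((B+1:ℕ):ℤ) - 1 = (B:ℤ) := by push_cast; ring
        have c0 : ((0:ℕ):ℤ) - 1 = -1 := by norm_num
        rw [ca, cb, c0] at h1 h2
        rw [(hneg _ _ (-1) (Or.inr (Or.inr (by norm_num)))).1] at h1 h2
        have ihA := (ih (A + (B+1) + 0) (by omega) A (B+1) 0 rfl).2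
        have ihB := (ih ((A+1) + B + 0) (by omega) (A+1) B 0 rfl).2
        rw [ihA, ihB] at h1 h2
        have hqa := congrArg (fun p => p.comp ((X:Polynomial ℤ)^2)) (L6a A B)
        have hqb := congrArg (fun p => p.comp ((X:Polynomial ℤ)^2)) (L6b A B)
        simp only [add_comp, mul_comp, X_pow_comp] at hqa hqb
        rw [show 2 * ((A+1) + (B+1) + 0) - 1 = 2*A+2*B+3 from by omega] at h1 h2
        constructor
        · rw [h1, hqa]; ring
        · rw [h2, hqb]; ring
      -- case (A+1,B+1,C+1)
      · have ca : ((A+1:ℕ):ℤ) - 1 = (A:ℤ) := by push_cast; ring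
        have cb : ((B+1:ℕ):ℤ) - 1 = (B:ℤ) := by push_cast; ring
        have cc : ((C+1:ℕ):ℤ) - 1 = (C:ℤ) := by push_cast; ring
        rw [ca, cb, cc] at h1 h2
        have ihA := (ih (A + (B+1) + (C+1)) (by omega) A (B+1) (C+1) rfl).2
        have ihB := (ih ((A+1) + B + (C+1)) (by omega) (A+1) B (C+1) rfl).2
        have ihC := (ih ((A+1) + (B+1) + C) (by omega) (A+1) (B+1) C rfl).1
        rw [ihA, ihB, ihC] at h1 h2
        have hqa := congrArg (fun p => p.comp ((X:Polynomial ℤ)^2)) (L7a A B C)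
        have hqb := congrArg (fun p => p.comp ((X:Polynomial ℤ)^2)) (L7b A B C)
        simp only [add_comp, mul_comp, X_pow_comp] at hqa hqb
        rw [show 2 * ((A+1) + (B+1) + (C+1)) - 1 = 2*A+2*B+2*C+5 from by omega] at h1 h2
        constructor
        · rw [h1, hqa]; ring
        · rw [h2, hqb]; ring
  intro a b c
  exact (key (a + b + c) a b c rfl).1
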